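/- Let ε ∈ (0, 1/2] with 1/ε ∈ ℕ, let d = 8/ε² (assume d ∈ ℕ), let k = 1, k' = 2k/ε = 2/ε, and let D be the uniform distribution on {1,...,d}. Define K = {1,...,k}, K_0 = {1,...,k'}, and for 1 ≤ t < T = 2/ε, K_t = K ∪ (k' + (t−1)(k'−k), k' + t(k'−k)]. Then: (a) K_t ∩ K_{t'} = K for all 0 ≤ t' < t < T; (b) D(K)/D(K_t) ≤ ε/2 for all t < T; (c) K_{T−1} ⊆ {1,..., 2k'/ε} ⊆ {1,...,d}; (d) every point of K is contained in every K_t, so any weighted majority of classifiers with error sets K_0,...,K_{T−1} has risk at least D(K) = k/d = ε²/8 under D. -/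

import Mathlib

/-- The common error core: `K = {1}` (here `k = 1`). -/
def pathK : Finset ℕ := Finset.Icc 1 1

/-- The error sets `K_t` of the lower-bound construction, in the domain `{1,…,d}`
with `d = 8n²`, `ε = 1/n`, `k = 1`, `k' = 2n`, `T = 2n`:
`K_0 = {1,…,2n}` and for `1 ≤ t`, `K_t = K ∪ (k' + (t-1)(k'-1), k' + t(k'-1)]`. -/
def pathKt (n t : ℕ) : Finset ℕ :=
  if t = 0 then Finset.Icc 1 (2 * n)
  else pathK ∪ Finset.Ioc (2 * n + (t - 1) * (2 * n - 1)) (2 * n + t * (2 * n - 1))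

lemma pathKt_card (n t : ℕ) (hn : 2 ≤ n) : (pathKt n t).card = 2 * n := by
  rcases Nat.eq_zero_or_pos t with rfl | ht
  · simp [pathKt]
  · obtain ⟨s, rfl⟩ : ∃ s, t = s + 1 := ⟨t - 1, by omega⟩
    have hdis : Disjoint pathK
        (Finset.Ioc (2 * n + (s + 1 - 1) * (2 * n - 1)) (2 * n + (s + 1) * (2 * n - 1))) := by
      simp only [Finset.disjoint_left, pathK, Finset.mem_Icc, Finset.mem_Ioc]
      intro x hx
      have : 2 * n ≤ 2 * n + (s + 1 - 1) * (2 * n - 1) := Nat.le_add_right _ _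
      omega
    simp only [pathKt, if_neg (Nat.succ_ne_zero s)]
    rw [Finset.card_union_of_disjoint hdis]
    have h1 : (s + 1) * (2 * n - 1) = s * (2 * n - 1) + (2 * n - 1) := by ring
    simp only [pathK, Nat.card_Icc, Nat.card_Ioc, Nat.add_sub_cancel, h1]
    omega

lemma pathK_card : pathK.card = 1 := by simp [pathK]

theorem path_lower_bound_construction (n : ℕ) (hn : 2 ≤ n) :
    (∀ t' t : ℕ, t' < t → t < 2 * n → pathKt n t ∩ pathKt n t' = pathK) ∧
    (∀ t < 2 * n, ((pathK.card : ℚ) / ((pathKt n t).card : ℚ)) ≤ (1 / n) / 2) ∧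
    (pathKt n (2 * n - 1) ⊆ Finset.Icc 1 (4 * n ^ 2) ∧
      Finset.Icc 1 (4 * n ^ 2) ⊆ Finset.Icc 1 (8 * n ^ 2)) ∧
    (∀ t < 2 * n, pathK ⊆ pathKt n t) ∧
    ((pathK.card : ℚ) / ((8 : ℚ) * n ^ 2) = ((1 : ℚ) / n) ^ 2 / 8) ∧
    (∀ Err : Finset ℕ, pathK ⊆ Err →
      ((1 : ℚ) / n) ^ 2 / 8 ≤ ((Err ∩ Finset.Icc 1 (8 * n ^ 2)).card : ℚ) / ((8 : ℚ) * n ^ 2)) := by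
  have hn0 : (0 : ℚ) < (n : ℚ) := by positivity
  refine ⟨?_, ?_, ⟨?_, ?_⟩, ?_, ?_, ?_⟩
  · -- (a)
    intro t' t htt' ht
    have ht0 : t ≠ 0 := by omega
    obtain ⟨s, rfl⟩ : ∃ s, t = s + 1 := ⟨t - 1, by omega⟩
    rcases Nat.eq_zero_or_pos t' with rfl | ht'
    · ext x
      have h1 : 2 * n ≤ 2 * n + (s + 1 - 1) * (2 * n - 1) := Nat.le_add_right _ _
      simp only [pathKt, if_neg (Nat.succ_ne_zero s), ite_true, Finset.mem_inter,
        Finset.mem_union, Finset.mem_Ioc, Finset.mem_Icc, pathK]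
      omega
    · obtain ⟨s', rfl⟩ : ∃ s', t' = s' + 1 := ⟨t' - 1, by omega⟩
      ext x
      have h1 : 2 * n ≤ 2 * n + s' * (2 * n - 1) := Nat.le_add_right _ _
      have h2 : (s' + 1) * (2 * n - 1) ≤ s * (2 * n - 1) :=
        Nat.mul_le_mul_right _ (by omega)
      simp only [pathKt, if_neg (Nat.succ_ne_zero s), if_neg (Nat.succ_ne_zero s'),
        Finset.mem_inter, Finset.mem_union, Finset.mem_Ioc, Finset.mem_Icc, pathK,
        Nat.add_sub_cancel]
      omega
  · -- (b)
    intro t ht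
    rw [pathKt_card n t hn, pathK_card]
    have : ((2 * n : ℕ) : ℚ) = 2 * (n : ℚ) := by push_cast; ring
    rw [this]
    rw [div_div]
    apply le_of_eq
    ring_nf
  · -- (c) first
    have hne : 2 * n - 1 ≠ 0 := by omega
    intro x hx
    simp only [pathKt, if_neg hne, Finset.mem_union, Finset.mem_Ioc, Finset.mem_Icc,
      pathK] at hx ⊢
    obtain ⟨m, rfl⟩ : ∃ m, n = m + 2 := ⟨n - 2, by omega⟩
    have key : 2 * (m + 2) + (2 * (m + 2) - 1) * (2 * (m + 2) - 1) ≤ 4 * (m + 2) ^ 2 := by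
      have h : 2 * (m + 2) - 1 = 2 * m + 3 := by omega
      rw [h]; nlinarith
    have h2 : 2 * (m + 2) - 1 - 1 ≤ 2 * (m + 2) - 1 := by omega
    have h3 : (2 * (m + 2) - 1 - 1) * (2 * (m + 2) - 1) ≤
        (2 * (m + 2) - 1) * (2 * (m + 2) - 1) := Nat.mul_le_mul_right _ h2
    constructor
    · rcases hx with h | h
      · omega
      · have : 2 * (m + 2) ≤ 2 * (m + 2) + (2 * (m + 2) - 1 - 1) * (2 * (m + 2) - 1) :=
          Nat.le_add_right _ _
        omega
    · rcases hx with h | h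
      · nlinarith
      · omega
  · -- (c) second
    apply Finset.Icc_subset_Icc_right
    nlinarith
  · -- (d)
    intro t _ x hx
    simp only [pathK, Finset.mem_Icc] at hx
    rcases Nat.eq_zero_or_pos t with rfl | ht
    · simp only [pathKt, ite_true, Finset.mem_Icc]; omega
    · simp only [pathKt, if_neg (by omega : t ≠ 0), Finset.mem_union, pathK, Finset.mem_Icc]
      left; omega
  · -- (e)
    rw [pathK_card]
    field_simp
    ring
  · -- (f)
    intro Err hErr
    have h1 : (1 : ℕ) ∈ Err ∩ Finset.Icc 1 (8 * n ^ 2) := by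
      rw [Finset.mem_inter]
      refine ⟨hErr ?_, ?_⟩
      · simp [pathK]
      · simp only [Finset.mem_Icc]; constructor <;> nlinarith
    have h2 : (1 : ℚ) ≤ ((Err ∩ Finset.Icc 1 (8 * n ^ 2)).card : ℚ) := by
      exact_mod_cast Finset.one_le_card.mpr ⟨1, h1⟩
    have heq : ((1 : ℚ) / n) ^ 2 / 8 = 1 / (8 * (n : ℚ) ^ 2) := by
      field_simp
    rw [heq]
    gcongr
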